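/- Let n ≥ 1, let Pₙ be the path graph on vertices Δ = {α₁,…,αₙ}, and let J₀ ⊆ Δ. Then the lattice Λ*(Pₙ,J₀) is supersolvable if and only if every connected component of J₀ (in Pₙ) is either a singleton {αᵢ} or a connected subset of Δ containing an end node of Pₙ. -/

import Mathlib

open SimpleGraph Finset

/-- `ReachIn G U a b` : `b` is reachable from `a` within the subgraph of `G`
induced on the vertex set `U`. -/
def ReachIn {n : ℕ} (G : SimpleGraph (Fin n)) (U : Finset (Fin n)) (a b : Fin n) : Prop :=
  Relation.ReflTransGen (fun x y => G.Adj x y ∧ x ∈ U ∧ y ∈ U) a b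

/-- `U` is admissible (with respect to `J₀`) if no connected component of the
subgraph of `G` induced on `U` is entirely contained in `J₀`: every component
contains a vertex outside `J₀`. -/
def Admissible {n : ℕ} (G : SimpleGraph (Fin n)) (J₀ U : Finset (Fin n)) : Prop :=
  ∀ a ∈ U, ∃ b, ReachIn G U a b ∧ b ∉ J₀

/-- A subset `A` is connected if the induced subgraph on `A` is connected. -/
def ConnIn {n : ℕ} (G : SimpleGraph (Fin n)) (A : Finset (Fin n)) : Prop :=
  ∀ a ∈ A, ∀ b ∈ A, ReachIn G A a b

theorem ReachIn.mono {n : ℕ} {G : SimpleGraph (Fin n)} {U V : Finset (Fin n)} (h : U ⊆ V)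
    {a b : Fin n} (hr : ReachIn G U a b) : ReachIn G V a b :=
  by
    unfold ReachIn at *
    induction hr with
    | refl => exact Relation.ReflTransGen.refl
    | tail _ hxy ih => exact ih.tail ⟨hxy.1, h hxy.2.1, h hxy.2.2⟩

theorem admissible_empty {n : ℕ} (G : SimpleGraph (Fin n)) (J₀ : Finset (Fin n)) :
    Admissible G J₀ ∅ := fun a ha => absurd ha (Finset.notMem_empty a)

theorem admissible_union {n : ℕ} {G : SimpleGraph (Fin n)} {J₀ U V : Finset (Fin n)}
    (hU : Admissible G J₀ U) (hV : Admissible G J₀ V) : Admissible G J₀ (U ∪ V) := by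
  intro a ha
  rcases Finset.mem_union.mp ha with h | h
  · obtain ⟨b, hb, hbJ⟩ := hU a h
    exact ⟨b, hb.mono Finset.subset_union_left, hbJ⟩
  · obtain ⟨b, hb, hbJ⟩ := hV a h
    exact ⟨b, hb.mono Finset.subset_union_right, hbJ⟩

/-- `Λ*(G, J₀)` : the poset of admissible subsets, ordered by inclusion. -/
def CrossSection {n : ℕ} (G : SimpleGraph (Fin n)) (J₀ : Finset (Fin n)) : Type :=
  {U : Finset (Fin n) // Admissible G J₀ U}

namespace CrossSection

variable {n : ℕ} {G : SimpleGraph (Fin n)} {J₀ : Finset (Fin n)}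

instance : PartialOrder (CrossSection G J₀) :=
  inferInstanceAs (PartialOrder {U : Finset (Fin n) // Admissible G J₀ U})

instance : DecidableEq (CrossSection G J₀) :=
  inferInstanceAs (DecidableEq {U : Finset (Fin n) // Admissible G J₀ U})

noncomputable instance : Fintype (CrossSection G J₀) :=
  Fintype.ofInjective (Subtype.val : CrossSection G J₀ → Finset (Fin n)) Subtype.val_injective

open Classical in
/-- The underlying set of the meet of two admissible sets: the largest admissible
subset contained in the intersection. -/
noncomputable def meetFinset (G : SimpleGraph (Fin n)) (J₀ : Finset (Fin n))
    (U V : Finset (Fin n)) : Finset (Fin n) :=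
  ((U ∩ V).powerset.filter (fun W => Admissible G J₀ W)).sup id

theorem admissible_sup {s : Finset (Finset (Fin n))}
    (h : ∀ W ∈ s, Admissible G J₀ W) : Admissible G J₀ (s.sup id) :=
  Finset.sup_induction (by simpa using admissible_empty G J₀)
    (fun a ha b hb => by simpa using admissible_union ha hb) h

theorem admissible_meetFinset (G : SimpleGraph (Fin n)) (J₀ U V : Finset (Fin n)) :
    Admissible G J₀ (meetFinset G J₀ U V) := by
  classical
  exact admissible_sup (fun W hW => (Finset.mem_filter.mp hW).2)

theorem meetFinset_subset_left (G : SimpleGraph (Fin n)) (J₀ U V : Finset (Fin n)) :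
    meetFinset G J₀ U V ≤ U := by
  classical
  unfold meetFinset
  refine Finset.sup_le (fun W hW => ?_)
  have := Finset.mem_powerset.mp (Finset.mem_filter.mp hW).1
  exact fun x hx => (Finset.mem_inter.mp (this hx)).1

theorem meetFinset_subset_right (G : SimpleGraph (Fin n)) (J₀ U V : Finset (Fin n)) :
    meetFinset G J₀ U V ≤ V := by
  classical
  unfold meetFinset
  refine Finset.sup_le (fun W hW => ?_)
  have := Finset.mem_powerset.mp (Finset.mem_filter.mp hW).1
  exact fun x hx => (Finset.mem_inter.mp (this hx)).2

theorem subset_meetFinset {G : SimpleGraph (Fin n)} {J₀ U V W : Finset (Fin n)}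
    (hW : Admissible G J₀ W) (h1 : W ⊆ U) (h2 : W ⊆ V) : W ≤ meetFinset G J₀ U V := by
  classical
  unfold meetFinset
  exact Finset.le_sup (f := id)
    (Finset.mem_filter.mpr ⟨Finset.mem_powerset.mpr (Finset.subset_inter h1 h2), hW⟩)

noncomputable instance : Lattice (CrossSection G J₀) :=
  { (inferInstance : PartialOrder (CrossSection G J₀)) with
    sup := fun U V => ⟨U.1 ∪ V.1, admissible_union U.2 V.2⟩
    le_sup_left := fun U V => show U.1 ⊆ U.1 ∪ V.1 from Finset.subset_union_left
    le_sup_right := fun U V => show V.1 ⊆ U.1 ∪ V.1 from Finset.subset_union_right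
    sup_le := fun U V W h1 h2 => show U.1 ∪ V.1 ⊆ W.1 from Finset.union_subset h1 h2
    inf := fun U V => ⟨meetFinset G J₀ U.1 V.1, admissible_meetFinset G J₀ U.1 V.1⟩
    inf_le_left := fun U V => meetFinset_subset_left G J₀ U.1 V.1
    inf_le_right := fun U V => meetFinset_subset_right G J₀ U.1 V.1
    le_inf := fun W U V h1 h2 => subset_meetFinset W.2 h1 h2 }

instance : OrderBot (CrossSection G J₀) where
  bot := ⟨∅, admissible_empty G J₀⟩
  bot_le := fun U => show (∅ : Finset (Fin n)) ⊆ U.1 from Finset.empty_subset _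

@[simp] theorem sup_val (U V : CrossSection G J₀) : (U ⊔ V).1 = U.1 ∪ V.1 := rfl

@[simp] theorem inf_val (U V : CrossSection G J₀) : (U ⊓ V).1 = meetFinset G J₀ U.1 V.1 := rfl

end CrossSection

/-- A finite lattice is supersolvable if it has a maximal chain `Γ` such that for
every chain `C`, the sublattice generated by `Γ ∪ C` is distributive. -/
def Supersolvable (α : Type*) [Lattice α] : Prop :=
  ∃ Γ : Set α, IsMaxChain (· ≤ ·) Γ ∧
    ∀ C : Set α, IsChain (· ≤ ·) C →
      ∀ x ∈ latticeClosure (Γ ∪ C), ∀ y ∈ latticeClosure (Γ ∪ C),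
        ∀ z ∈ latticeClosure (Γ ∪ C), x ⊓ (y ⊔ z) = (x ⊓ y) ⊔ (x ⊓ z)


section Btwn
variable {n : ℕ}

def Btwn (a b c : Fin n) : Prop :=
  (a.val ≤ c.val ∧ c.val ≤ b.val) ∨ (b.val ≤ c.val ∧ c.val ≤ a.val)

lemma btwn_left (a b : Fin n) : Btwn a b a := by unfold Btwn; omega
lemma btwn_right (a b : Fin n) : Btwn a b b := by unfold Btwn; omega
lemma btwn_comm {a b c : Fin n} (h : Btwn a b c) : Btwn b a c := by unfold Btwn at *; omega

lemma reachIn_of_btwn_aux {U : Finset (Fin n)} :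
    ∀ d (a b : Fin n), a.val + d = b.val → (∀ c, Btwn a b c → c ∈ U) →
      ReachIn (pathGraph n) U a b := by
  intro d
  induction d with
  | zero =>
    intro a b h _
    have : a = b := Fin.ext (by omega)
    exact this ▸ Relation.ReflTransGen.refl
  | succ d ih =>
    intro a b h hc
    have hb := b.isLt
    set a' : Fin n := ⟨a.val + 1, by omega⟩ with ha'
    have step : (pathGraph n).Adj a a' ∧ a ∈ U ∧ a' ∈ U :=
      ⟨pathGraph_adj.mpr (Or.inl rfl), hc a (btwn_left _ _),
        hc a' (by unfold Btwn; simp only [ha']; omega)⟩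
    exact Relation.ReflTransGen.head step
      (ih a' b (by simp only [ha']; omega)
        (fun c hcc => hc c (by unfold Btwn at *; simp only [ha'] at hcc; omega)))

lemma reachIn_symm {U : Finset (Fin n)} {a b : Fin n}
    (h : ReachIn (pathGraph n) U a b) : ReachIn (pathGraph n) U b a := by
  unfold ReachIn at *
  induction h with
  | refl => exact Relation.ReflTransGen.refl
  | tail _ hxy ih => exact Relation.ReflTransGen.head ⟨hxy.1.symm, hxy.2.2, hxy.2.1⟩ ih

lemma btwn_of_reachIn {U : Finset (Fin n)} {a b : Fin n}
    (h : ReachIn (pathGraph n) U a b) : a = b ∨ ∀ c, Btwn a b c → c ∈ U := by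
  induction h with
  | refl => exact Or.inl rfl
  | @tail x y h1 h2 ih =>
    obtain ⟨hadj, hxU, hyU⟩ := h2
    have hd := pathGraph_adj.mp hadj
    right
    intro c hc
    rcases ih with rfl | ih
    · have : c = a ∨ c = y := by
        unfold Btwn at hc
        rcases hd with hd | hd
        · rcases (by omega : c.val = a.val ∨ c.val = y.val) with h | h
          · exact Or.inl (Fin.ext h)
          · exact Or.inr (Fin.ext h)
        · rcases (by omega : c.val = a.val ∨ c.val = y.val) with h | h
          · exact Or.inl (Fin.ext h)
          · exact Or.inr (Fin.ext h)
      rcases this with rfl | rfl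
      · exact hxU
      · exact hyU
    · by_cases hcy : c = y
      · exact hcy ▸ hyU
      · apply ih
        have hne : c.val ≠ y.val := fun he => hcy (Fin.ext he)
        unfold Btwn at *
        omega

lemma reachIn_iff {U : Finset (Fin n)} {a b : Fin n} :
    ReachIn (pathGraph n) U a b ↔ a = b ∨ ∀ c, Btwn a b c → c ∈ U := by
  constructor
  · exact btwn_of_reachIn
  · rintro (rfl | h)
    · exact Relation.ReflTransGen.refl
    · rcases Nat.le_total a.val b.val with hab | hab
      · exact reachIn_of_btwn_aux (b.val - a.val) a b (by omega) h
      · exact reachIn_symm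
          (reachIn_of_btwn_aux (a.val - b.val) b a (by omega) (fun c hc => h c (btwn_comm hc)))

lemma admissible_iff {J₀ U : Finset (Fin n)} :
    Admissible (pathGraph n) J₀ U ↔
      ∀ a ∈ U, ∃ b, b ∉ J₀ ∧ ∀ c, Btwn a b c → c ∈ U := by
  constructor
  · intro h a ha
    obtain ⟨b, hr, hb⟩ := h a ha
    rcases btwn_of_reachIn hr with rfl | hI
    · exact ⟨a, hb, fun c hc => by
        have : c = a := Fin.ext (by unfold Btwn at hc; omega)
        exact this ▸ ha⟩
    · exact ⟨b, hb, hI⟩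
  · intro h a ha
    obtain ⟨b, hb, hI⟩ := h a ha
    exact ⟨b, reachIn_iff.mpr (Or.inr hI), hb⟩

end Btwn



section Witness
variable {n : ℕ} {J₀ U V : Finset (Fin n)}

open Classical in
lemma exists_nearest_witness (hU : Admissible (pathGraph n) J₀ U)
    {a : Fin n} (ha : a ∈ U) :
    ∃ b, b ∉ J₀ ∧ (∀ c, Btwn a b c → c ∈ U) ∧
      (∀ b', b' ∉ J₀ → (∀ c, Btwn a b' c → c ∈ U) → Nat.dist a.val b.val ≤ Nat.dist a.val b'.val) := by
  classical
  set W : Finset (Fin n) := univ.filter (fun b => b ∉ J₀ ∧ ∀ c, Btwn a b c → c ∈ U) with hW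
  have hWne : W.Nonempty := by
    obtain ⟨b, hb, hI⟩ := admissible_iff.mp hU a ha
    exact ⟨b, mem_filter.mpr ⟨mem_univ _, hb, hI⟩⟩
  obtain ⟨b, hbW, hmin⟩ := W.exists_min_image (fun b => Nat.dist a.val b.val) hWne
  simp only [hW, mem_filter, mem_univ, true_and] at hbW
  refine ⟨b, hbW.1, hbW.2, fun b' hb' hI' => ?_⟩
  exact hmin b' (mem_filter.mpr ⟨mem_univ _, hb', hI'⟩)

/-- all points of the interval to a nearest witness, other than the witness, lie in J₀ -/
lemma nearest_witness_interior (hU : Admissible (pathGraph n) J₀ U)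
    {a : Fin n} (ha : a ∈ U) :
    ∃ b, b ∉ J₀ ∧ (∀ c, Btwn a b c → c ∈ U) ∧
      (∀ c, Btwn a b c → c ≠ b → c ∈ J₀) := by
  obtain ⟨b, hb, hI, hmin⟩ := exists_nearest_witness hU ha
  refine ⟨b, hb, hI, fun c hc hcb => ?_⟩
  by_contra hcJ
  have h1 : ∀ x, Btwn a c x → x ∈ U := fun x hx => hI x (by unfold Btwn at *; omega)
  have := hmin c hcJ h1
  have hne : c.val ≠ b.val := fun he => hcb (Fin.ext he)
  unfold Btwn at hc
  simp [Nat.dist] at this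
  omega

open Classical in
lemma exists_erase_admissible (hV : Admissible (pathGraph n) J₀ V)
    (hU : Admissible (pathGraph n) J₀ U) (hUV : U ⊆ V) (hne : U ≠ V) :
    ∃ v ∈ V, v ∉ U ∧ Admissible (pathGraph n) J₀ (V.erase v) := by
  classical
  set W : Fin n → Finset (Fin n) :=
    fun a => univ.filter (fun b => b ∉ J₀ ∧ ∀ c, Btwn a b c → c ∈ V) with hWdef
  have hWne : ∀ a ∈ V, (W a).Nonempty := by
    intro a ha
    obtain ⟨b, hb, hI⟩ := admissible_iff.mp hV a ha
    exact ⟨b, mem_filter.mpr ⟨mem_univ _, hb, hI⟩⟩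
  set d : Fin n → ℕ := fun a =>
    if h : (W a).Nonempty then ((W a).image (fun b => Nat.dist a.val b.val)).min' (h.image _)
    else 0 with hddef
  have hdspec : ∀ a ∈ V, ∃ b ∈ W a, Nat.dist a.val b.val = d a ∧
      ∀ b' ∈ W a, d a ≤ Nat.dist a.val b'.val := by
    intro a ha
    have hne' := hWne a ha
    have hmem := ((W a).image (fun b => Nat.dist a.val b.val)).min'_mem (hne'.image _)
    rw [Finset.mem_image] at hmem
    obtain ⟨b, hb, hbeq⟩ := hmem
    refine ⟨b, hb, by rw [hddef]; simp [hne']; omega, fun b' hb' => ?_⟩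
    rw [hddef]
    simp only [hne', dif_pos]
    exact Finset.min'_le _ _ (Finset.mem_image_of_mem _ hb')
  have hVU : (V \ U).Nonempty := by
    rcases Finset.exists_of_ssubset (lt_of_le_of_ne hUV hne) with ⟨v, hv, hvU⟩
    exact ⟨v, Finset.mem_sdiff.mpr ⟨hv, hvU⟩⟩
  obtain ⟨v, hvVU, hvmax⟩ := (V \ U).exists_max_image d hVU
  rw [Finset.mem_sdiff] at hvVU
  obtain ⟨hvV, hvU⟩ := hvVU
  refine ⟨v, hvV, hvU, ?_⟩
  rw [admissible_iff]
  intro a ha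
  rw [Finset.mem_erase] at ha
  obtain ⟨hav, haV⟩ := ha
  by_cases haU : a ∈ U
  · -- witness inside U avoids v
    obtain ⟨b, hb, hI⟩ := admissible_iff.mp hU a haU
    refine ⟨b, hb, fun c hc => Finset.mem_erase.mpr ⟨fun hcv => hvU (hcv ▸ hI c hc), hUV (hI c hc)⟩⟩
  · -- a ∈ V \ U : use nearest witness; v cannot be on it
    obtain ⟨b, hbW, hbd, hbmin⟩ := hdspec a haV
    simp only [hWdef, mem_filter, mem_univ, true_and] at hbW
    obtain ⟨hbJ, hbI⟩ := hbW
    suffices hvnb : ¬ Btwn a b v by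
      exact ⟨b, hbJ, fun c hc => Finset.mem_erase.mpr ⟨fun hcveq => hvnb (hcveq ▸ hc), hbI c hc⟩⟩
    intro hc
    -- v lies between a and b
    have haVU : a ∈ V \ U := Finset.mem_sdiff.mpr ⟨haV, haU⟩
    have hda : d a ≤ d v := hvmax a haVU
    by_cases hvb : v = b
    · -- then v ∉ J₀, d v = 0, so d a = 0, so a = b = v, contra
      subst hvb
      have hvW : v ∈ W v := by
        simp only [hWdef, mem_filter, mem_univ, true_and]
        exact ⟨hbJ, fun c hc => by
          have : c = v := Fin.ext (by unfold Btwn at hc; omega)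
          exact this ▸ hvV⟩
      obtain ⟨b0, hb0, hb0d, hb0min⟩ := hdspec v hvV
      have : d v = 0 := by
        have := hb0min v hvW
        simp [Nat.dist] at this
        omega
      have hda0 : d a = 0 := by omega
      have : Nat.dist a.val v.val = 0 := by omega
      exact hav (Fin.ext (by simp [Nat.dist] at this; omega))
    · -- v strictly between: witness b is closer to v
      have hbWv : b ∈ W v := by
        simp only [hWdef, mem_filter, mem_univ, true_and]
        exact ⟨hbJ, fun c hcc => hbI c (by unfold Btwn at *; omega)⟩
      obtain ⟨b0, hb0, hb0d, hb0min⟩ := hdspec v hvV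
      have h1 : d v ≤ Nat.dist v.val b.val := hb0min b hbWv
      have h2 : Nat.dist v.val b.val < Nat.dist a.val b.val := by
        have hne1 : a.val ≠ v.val := fun h => hav (Fin.ext h)
        have hne2 : v.val ≠ b.val := fun h => hvb (Fin.ext h)
        unfold Btwn at hc
        simp only [Nat.dist]
        omega
      omega

section Key
variable {n : ℕ} (J₀ : Finset (Fin n))

def DownC (a : Fin n) : Prop := ∀ c : Fin n, c.val ≤ a.val → c ∈ J₀
def UpC (a : Fin n) : Prop := ∀ c : Fin n, a.val ≤ c.val → c ∈ J₀

variable {J₀}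

lemma downC_mem {a : Fin n} (h : DownC J₀ a) : a ∈ J₀ := h a le_rfl
lemma upC_mem {a : Fin n} (h : UpC J₀ a) : a ∈ J₀ := h a le_rfl

lemma downC_mono {a b : Fin n} (h : DownC J₀ a) (hba : b.val ≤ a.val) : DownC J₀ b :=
  fun c hc => h c (le_trans hc hba)

lemma upC_mono {a b : Fin n} (h : UpC J₀ a) (hba : a.val ≤ b.val) : UpC J₀ b :=
  fun c hc => h c (le_trans hba hc)

lemma downC_upC_univ {a b : Fin n} (hd : DownC J₀ a) (hu : UpC J₀ b) (hba : b.val ≤ a.val) :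
    J₀ = univ := by
  apply Finset.eq_univ_iff_forall.mpr
  intro c
  rcases Nat.le_total c.val a.val with h | h
  · exact hd c h
  · exact hu c (by omega)

open Classical in
noncomputable def keyF (J₀ : Finset (Fin n)) (v : Fin n) : ℕ :=
  if v ∉ J₀ then v.val
  else if DownC J₀ v then 2*n + (n - v.val)
  else if UpC J₀ v then 4*n + v.val
  else n + v.val

lemma keyF_inj {v w : Fin n} (h : keyF J₀ v = keyF J₀ w) : v = w := by
  have hv := v.isLt
  have hw := w.isLt
  unfold keyF at h
  split_ifs at h <;> exact Fin.ext (by omega)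

lemma keyF_lt (hn : 1 ≤ n) (v : Fin n) : keyF J₀ v < 5*n := by
  have hv := v.isLt
  unfold keyF
  split_ifs <;> omega

lemma keyF_notmem {v : Fin n} (hv : v ∉ J₀) : keyF J₀ v = v.val := by
  unfold keyF; rw [if_pos hv]

lemma keyF_ge_of_mem {v : Fin n} (hv : v ∈ J₀) : n ≤ keyF J₀ v := by
  have := v.isLt
  unfold keyF
  split_ifs <;> omega

noncomputable def prefixF (J₀ : Finset (Fin n)) (t : ℕ) : Finset (Fin n) :=
  univ.filter (fun v => keyF J₀ v < t)

lemma prefixF_mono {s t : ℕ} (h : s ≤ t) : prefixF J₀ s ⊆ prefixF J₀ t := by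
  intro v hv
  rw [prefixF, mem_filter] at *
  exact ⟨mem_univ _, lt_of_lt_of_le hv.2 h⟩

lemma prefixF_univ (hn : 1 ≤ n) : prefixF J₀ (5*n) = univ := by
  apply Finset.eq_univ_iff_forall.mpr
  intro v
  rw [prefixF, mem_filter]
  exact ⟨mem_univ _, keyF_lt hn v⟩

/-- the Star condition -/
def StarC (n : ℕ) (J₀ : Finset (Fin n)) : Prop :=
  ∀ a ∈ J₀, (∀ b, ReachIn (pathGraph n) J₀ a b → b = a) ∨ DownC J₀ a ∨ UpC J₀ a

/-- key goodness lemma : intersection of a prefix with an admissible set is admissible -/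
lemma prefixF_good (hJ : J₀ ≠ univ) (hstar : StarC n J₀) (t : ℕ) {U : Finset (Fin n)}
    (hU : Admissible (pathGraph n) J₀ U) :
    Admissible (pathGraph n) J₀ (prefixF J₀ t ∩ U) := by
  intro a ha
  rw [mem_inter] at ha
  obtain ⟨haG, haU⟩ := ha
  have haG' : keyF J₀ a < t := (mem_filter.mp haG).2
  by_cases ht : t ≤ n
  · -- prefix consists of non-J₀ vertices only
    have haJ : a ∉ J₀ := fun h => by have := keyF_ge_of_mem (J₀ := J₀) h; omega
    exact ⟨a, Relation.ReflTransGen.refl, haJ⟩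
  · push_neg at ht
    obtain ⟨b, hbJ, hbI, hbint⟩ := nearest_witness_interior hU haU
    refine ⟨b, ?_, hbJ⟩
    rw [reachIn_iff]
    right
    intro c hc
    rw [mem_inter]
    refine ⟨?_, hbI c hc⟩
    by_cases hcJ : c ∈ J₀
    · -- c ≠ b
      have hcb : c ≠ b := fun h => hbJ (h ▸ hcJ)
      by_cases hca : c = a
      · exact hca ▸ haG
      · -- c strictly between a and b
        have hcb' : c.val ≠ b.val := fun h => hcb (Fin.ext h)
        have hca' : c.val ≠ a.val := fun h => hca (Fin.ext h)
        rcases hstar c hcJ with hiso | hdo | hup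
        · -- c has a neighbour towards a inside the interval, also in J₀ : contradiction
          exfalso
          have hd : ∃ d : Fin n, (d.val + 1 = c.val ∨ c.val + 1 = d.val) ∧ Btwn a b d ∧ d ≠ b := by
            unfold Btwn at hc ⊢
            rcases Nat.lt_or_ge a.val c.val with h | h
            · refine ⟨⟨c.val - 1, by omega⟩, by simp; omega, by simp; omega, ?_⟩
              intro he
              have := congrArg Fin.val he
              simp at this
              omega
            · refine ⟨⟨c.val + 1, by omega⟩, by simp, by simp; omega, ?_⟩
              intro he
              have := congrArg Fin.val he
              simp at this
              omega
          obtain ⟨d, hdadj, hdbtw, hdb⟩ := hd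
          have hdJ : d ∈ J₀ := hbint d hdbtw hdb
          have : d = c := by
            apply hiso d
            rw [reachIn_iff]
            right
            intro x hx
            have : x = c ∨ x = d := by
              unfold Btwn at hx
              rcases hdadj with h | h
              · rcases (by omega : x.val = c.val ∨ x.val = d.val) with h' | h'
                · exact Or.inl (Fin.ext h')
                · exact Or.inr (Fin.ext h')
              · rcases (by omega : x.val = c.val ∨ x.val = d.val) with h' | h'
                · exact Or.inl (Fin.ext h')
                · exact Or.inr (Fin.ext h')
            rcases this with rfl | rfl
            · exact hcJ
            · exact hdJ
          rcases hdadj with h | h <;> (rw [this] at *; omega)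
        · -- DownC c : then a < c < b and a is also Down
          have hcltb : c.val < b.val := by
            by_contra h
            exact hbJ (hdo b (by omega))
          have haltc : a.val < c.val := by
            unfold Btwn at hc
            omega
          have haJ : a ∈ J₀ := hbint a (btwn_left _ _) (fun h => by rw [h] at haltc; omega)
          have hda : DownC J₀ a := downC_mono hdo (by omega)
          have hkeya : keyF J₀ a = 2*n + (n - a.val) := by
            unfold keyF
            rw [if_neg (by simpa using haJ), if_pos hda]
          have hkeyc : keyF J₀ c = 2*n + (n - c.val) := by
            unfold keyF
            rw [if_neg (by simpa using hcJ), if_pos hdo]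
          rw [prefixF, mem_filter]
          have := a.isLt
          have := c.isLt
          exact ⟨mem_univ _, by omega⟩
        · -- UpC c : then b < c < a and a is also Up
          have hbltc : b.val < c.val := by
            by_contra h
            exact hbJ (hup b (by omega))
          have hclta : c.val < a.val := by
            unfold Btwn at hc
            omega
          have haJ : a ∈ J₀ := hbint a (btwn_left _ _) (fun h => by
            have := congrArg Fin.val h
            omega)
          have hua : UpC J₀ a := upC_mono hup (by omega)
          have hnda : ¬ DownC J₀ a := fun h => hJ (downC_upC_univ h hup (by omega))
          have hndc : ¬ DownC J₀ c := fun h => hJ (downC_upC_univ h hup le_rfl)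
          have hkeya : keyF J₀ a = 4*n + a.val := by
            unfold keyF
            rw [if_neg (by simpa using haJ), if_neg hnda, if_pos hua]
          have hkeyc : keyF J₀ c = 4*n + c.val := by
            unfold keyF
            rw [if_neg (by simpa using hcJ), if_neg hndc, if_pos hup]
          rw [prefixF, mem_filter]
          exact ⟨mem_univ _, by omega⟩
    · -- c ∉ J₀ : key < n < t
      rw [prefixF, mem_filter]
      rw [keyF_notmem hcJ] at *
      exact ⟨mem_univ _, by have := c.isLt; omega⟩

lemma exists_prefixF_card (hn : 1 ≤ n) :
    ∀ k, k ≤ n → ∃ t, (prefixF J₀ t).card = k := by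
  intro k
  induction k with
  | zero =>
    intro _
    refine ⟨0, ?_⟩
    rw [prefixF]
    simp
  | succ k ih =>
    intro hk
    obtain ⟨t, ht⟩ := ih (by omega)
    have hne : (univ.filter (fun v => ¬ keyF J₀ v < t)).Nonempty := by
      by_contra h
      rw [Finset.not_nonempty_iff_eq_empty, Finset.filter_eq_empty_iff] at h
      push_neg at h
      have : prefixF J₀ t = univ := Finset.eq_univ_iff_forall.mpr
        (fun v => mem_filter.mpr ⟨mem_univ _, h (mem_univ v)⟩)
      rw [this, Finset.card_univ, Fintype.card_fin] at ht
      omega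
    obtain ⟨v₀, hv₀, hv₀min⟩ := (univ.filter (fun v => ¬ keyF J₀ v < t)).exists_min_image
      (keyF J₀) hne
    rw [mem_filter] at hv₀
    refine ⟨keyF J₀ v₀ + 1, ?_⟩
    have heq : prefixF J₀ (keyF J₀ v₀ + 1) = insert v₀ (prefixF J₀ t) := by
      ext w
      rw [prefixF, mem_filter, Finset.mem_insert, prefixF, mem_filter]
      constructor
      · rintro ⟨-, hw⟩
        by_cases hwt : keyF J₀ w < t
        · exact Or.inr ⟨mem_univ _, hwt⟩
        · have := hv₀min w (mem_filter.mpr ⟨mem_univ _, hwt⟩)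
          exact Or.inl (keyF_inj (J₀ := J₀) (by omega))
      · rintro (rfl | ⟨-, hw⟩)
        · exact ⟨mem_univ _, by omega⟩
        · exact ⟨mem_univ _, by omega⟩
    rw [heq, Finset.card_insert_of_notMem (by
      rw [prefixF, mem_filter]
      push_neg
      intro _
      omega), ht]

end Key

section LatticeAux
variable {n : ℕ} {G : SimpleGraph (Fin n)} {J₀ : Finset (Fin n)}

lemma mem_meetFinset {U V : Finset (Fin n)} {v : Fin n} :
    v ∈ CrossSection.meetFinset G J₀ U V ↔
      ∃ W, Admissible G J₀ W ∧ W ⊆ U ∧ W ⊆ V ∧ v ∈ W := by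
  classical
  unfold CrossSection.meetFinset
  rw [Finset.mem_sup]
  constructor
  · rintro ⟨W, hW, hv⟩
    rw [Finset.mem_filter, Finset.mem_powerset] at hW
    exact ⟨W, hW.2, fun x hx => (Finset.mem_inter.mp (hW.1 hx)).1,
      fun x hx => (Finset.mem_inter.mp (hW.1 hx)).2, hv⟩
  · rintro ⟨W, hW, h1, h2, hv⟩
    exact ⟨W, Finset.mem_filter.mpr ⟨Finset.mem_powerset.mpr (Finset.subset_inter h1 h2), hW⟩, hv⟩

lemma le_iff_val {x y : CrossSection G J₀} : x ≤ y ↔ x.val ⊆ y.val := Iff.rfl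

lemma inf_val_eq (x y : CrossSection G J₀) (h : Admissible G J₀ (x.val ∩ y.val)) :
    (x ⊓ y).val = x.val ∩ y.val := by
  apply subset_antisymm
  · intro v hv
    rw [CrossSection.inf_val, mem_meetFinset] at hv
    obtain ⟨W, _, h1, h2, hv⟩ := hv
    exact Finset.mem_inter.mpr ⟨h1 hv, h2 hv⟩
  · intro v hv
    rw [CrossSection.inf_val, mem_meetFinset]
    exact ⟨x.val ∩ y.val, h, Finset.inter_subset_left, Finset.inter_subset_right, hv⟩

end LatticeAux

section Forward
variable {n : ℕ} {J₀ : Finset (Fin n)}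

lemma admissible_univ (hJ : J₀ ≠ Finset.univ) :
    Admissible (pathGraph n) J₀ (Finset.univ : Finset (Fin n)) := by
  obtain ⟨e, he⟩ : ∃ e, e ∉ J₀ := by
    by_contra h
    push_neg at h
    exact hJ (Finset.eq_univ_iff_forall.mpr h)
  exact admissible_iff.mpr (fun a _ => ⟨e, he, fun c _ => Finset.mem_univ c⟩)

lemma supersolvable_of_star (hn : 1 ≤ n) (hJ : J₀ ≠ Finset.univ) (hstar : StarC n J₀) :
    Supersolvable (CrossSection (pathGraph n) J₀) := by
  classical
  have hadmU := admissible_univ hJ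
  have hadmPre : ∀ t, Admissible (pathGraph n) J₀ (prefixF J₀ t) := fun t => by
    have := prefixF_good hJ hstar t hadmU
    rwa [Finset.inter_univ] at this
  set Γ : Set (CrossSection (pathGraph n) J₀) := {x | ∃ t, x.val = prefixF J₀ t} with hΓdef
  have hΓcomp : ∀ g ∈ Γ, ∀ g' ∈ Γ, g.val ⊆ g'.val ∨ g'.val ⊆ g.val := by
    rintro g ⟨t, hg⟩ g' ⟨s, hg'⟩
    rw [hg, hg']
    rcases Nat.le_total t s with h | h
    · exact Or.inl (prefixF_mono h)
    · exact Or.inr (prefixF_mono h)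
  have hchain : IsChain (· ≤ ·) Γ := by
    intro x hx y hy _
    rcases hΓcomp x hx y hy with h | h
    · exact Or.inl h
    · exact Or.inr h
  refine ⟨Γ, ⟨hchain, ?_⟩, ?_⟩
  · -- maximality
    intro Γ' hΓ' hsub
    apply Set.Subset.antisymm hsub
    intro x hx
    have hcard : x.val.card ≤ n := by
      simpa using Finset.card_le_univ x.val
    obtain ⟨t, ht⟩ := exists_prefixF_card (J₀ := J₀) hn x.val.card hcard
    set g : CrossSection (pathGraph n) J₀ := ⟨prefixF J₀ t, hadmPre t⟩ with hgdef
    have hgΓ : g ∈ Γ := ⟨t, rfl⟩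
    by_cases hxg : x = g
    · exact hxg ▸ hgΓ
    · rcases hΓ' hx (hsub hgΓ) hxg with h | h
      · have : x.val = g.val :=
          Finset.eq_of_subset_of_card_le (le_iff_val.mp h) (le_of_eq ht)
        exact absurd (Subtype.ext this) hxg
      · have : g.val = x.val :=
          Finset.eq_of_subset_of_card_le (le_iff_val.mp h) (le_of_eq ht.symm)
        exact absurd (Subtype.ext this.symm) hxg
  · -- distributivity over lattice closure
    intro C hC
    set top' : CrossSection (pathGraph n) J₀ := ⟨Finset.univ, hadmU⟩ with htopdef
    have htopΓ : top' ∈ Γ := ⟨5*n, (prefixF_univ hn).symm⟩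
    set D : Set (CrossSection (pathGraph n) J₀) := C ∪ {top'} with hDdef
    have hDcomp : ∀ c ∈ D, ∀ c' ∈ D, c.val ⊆ c'.val ∨ c'.val ⊆ c.val := by
      rintro c (hc | hc) c' (hc' | hc')
      · by_cases hcc : c = c'
        · exact Or.inl (hcc ▸ Finset.Subset.refl _)
        · rcases hC hc hc' hcc with h | h
          · exact Or.inl h
          · exact Or.inr h
      · rw [Set.mem_singleton_iff] at hc'
        exact Or.inl (hc' ▸ Finset.subset_univ _)
      · rw [Set.mem_singleton_iff] at hc
        exact Or.inr (hc ▸ Finset.subset_univ _)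
      · rw [Set.mem_singleton_iff] at hc hc'
        exact Or.inl (hc ▸ hc' ▸ Finset.Subset.refl _)
    have hterm : ∀ g ∈ Γ, ∀ c : CrossSection (pathGraph n) J₀,
        Admissible (pathGraph n) J₀ (g.val ∩ c.val) := by
      rintro g ⟨t, hgt⟩ c
      rw [hgt]
      exact prefixF_good hJ hstar t c.2
    set S : Set (CrossSection (pathGraph n) J₀) :=
      {w | ∀ v ∈ w.val, ∃ g c : CrossSection (pathGraph n) J₀, g ∈ Γ ∧ c ∈ D ∧
        v ∈ g.val ∩ c.val ∧ g.val ∩ c.val ⊆ w.val} with hSdef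
    have hinterpt : ∀ x ∈ S, ∀ y ∈ S, ∀ v ∈ x.val ∩ y.val,
        ∃ g c : CrossSection (pathGraph n) J₀, g ∈ Γ ∧ c ∈ D ∧
          v ∈ g.val ∩ c.val ∧ g.val ∩ c.val ⊆ x.val ∩ y.val := by
      intro x hx y hy v hv
      rw [Finset.mem_inter] at hv
      obtain ⟨g1, c1, hg1, hc1, hv1, hs1⟩ := hx v hv.1
      obtain ⟨g2, c2, hg2, hc2, hv2, hs2⟩ := hy v hv.2
      rw [Finset.mem_inter] at hv1 hv2
      have key : ∀ g c : CrossSection (pathGraph n) J₀, g ∈ Γ → c ∈ D →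
          g.val ⊆ g1.val → g.val ⊆ g2.val → c.val ⊆ c1.val → c.val ⊆ c2.val →
          v ∈ g.val → v ∈ c.val →
          ∃ g' c' : CrossSection (pathGraph n) J₀, g' ∈ Γ ∧ c' ∈ D ∧
            v ∈ g'.val ∩ c'.val ∧ g'.val ∩ c'.val ⊆ x.val ∩ y.val := by
        intro g c hg hc hgg1 hgg2 hcc1 hcc2 hvg hvc
        refine ⟨g, c, hg, hc, Finset.mem_inter.mpr ⟨hvg, hvc⟩, fun u hu => ?_⟩
        rw [Finset.mem_inter] at hu
        exact Finset.mem_inter.mpr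
          ⟨hs1 (Finset.mem_inter.mpr ⟨hgg1 hu.1, hcc1 hu.2⟩),
           hs2 (Finset.mem_inter.mpr ⟨hgg2 hu.1, hcc2 hu.2⟩)⟩
      rcases hΓcomp g1 hg1 g2 hg2 with hgg | hgg <;>
        rcases hDcomp c1 hc1 c2 hc2 with hcc | hcc
      · exact key g1 c1 hg1 hc1 (Finset.Subset.refl _) hgg (Finset.Subset.refl _) hcc hv1.1 hv1.2
      · exact key g1 c2 hg1 hc2 (Finset.Subset.refl _) hgg hcc (Finset.Subset.refl _) hv1.1 hv2.2
      · exact key g2 c1 hg2 hc1 hgg (Finset.Subset.refl _) (Finset.Subset.refl _) hcc hv2.1 hv1.2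
      · exact key g2 c2 hg2 hc2 hgg (Finset.Subset.refl _) hcc (Finset.Subset.refl _) hv2.1 hv2.2
    have hinteradm : ∀ x ∈ S, ∀ y ∈ S, Admissible (pathGraph n) J₀ (x.val ∩ y.val) := by
      intro x hx y hy a ha
      obtain ⟨g, c, hg, hc, hm, hsub'⟩ := hinterpt x hx y hy a ha
      obtain ⟨b, hreach, hbJ⟩ := hterm g hg c a hm
      exact ⟨b, hreach.mono hsub', hbJ⟩
    have hSsup : SupClosed S := by
      intro x hx y hy v hv
      rw [CrossSection.sup_val, Finset.mem_union] at hv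
      rcases hv with hv | hv
      · obtain ⟨g, c, hg, hc, hm, hs⟩ := hx v hv
        exact ⟨g, c, hg, hc, hm, fun u hu => by
          rw [CrossSection.sup_val, Finset.mem_union]; exact Or.inl (hs hu)⟩
      · obtain ⟨g, c, hg, hc, hm, hs⟩ := hy v hv
        exact ⟨g, c, hg, hc, hm, fun u hu => by
          rw [CrossSection.sup_val, Finset.mem_union]; exact Or.inr (hs hu)⟩
    have hSinf : InfClosed S := by
      intro x hx y hy v hv
      rw [inf_val_eq x y (hinteradm x hx y hy)] at hv
      obtain ⟨g, c, hg, hc, hm, hs⟩ := hinterpt x hx y hy v hv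
      exact ⟨g, c, hg, hc, hm, by rw [inf_val_eq x y (hinteradm x hx y hy)]; exact hs⟩
    have hΓS : Γ ⊆ S := by
      intro g hg v hv
      exact ⟨g, top', hg, Or.inr rfl,
        Finset.mem_inter.mpr ⟨hv, Finset.mem_univ v⟩,
        fun u hu => (Finset.mem_inter.mp hu).1⟩
    have hCS : C ⊆ S := by
      intro c hc v hv
      exact ⟨top', c, htopΓ, Or.inl hc,
        Finset.mem_inter.mpr ⟨Finset.mem_univ v, hv⟩,
        fun u hu => (Finset.mem_inter.mp hu).2⟩
    have hclosure : latticeClosure (Γ ∪ C) ⊆ S :=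
      latticeClosure_min (Set.union_subset hΓS hCS) ⟨hSsup, hSinf⟩
    intro x hx y hy z hz
    have hxS := hclosure hx
    have hyS := hclosure hy
    have hzS := hclosure hz
    have hyzS : y ⊔ z ∈ S := hSsup hyS hzS
    have hxyS : x ⊓ y ∈ S := hSinf hxS hyS
    have hxzS : x ⊓ z ∈ S := hSinf hxS hzS
    apply Subtype.ext
    rw [inf_val_eq x (y ⊔ z) (hinteradm x hxS (y ⊔ z) hyzS), CrossSection.sup_val,
      CrossSection.sup_val, inf_val_eq x y (hinteradm x hxS y hyS),
      inf_val_eq x z (hinteradm x hxS z hzS), Finset.inter_union_distrib_left]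

end Forward

section Converse
variable {n : ℕ} {J₀ : Finset (Fin n)}

lemma not_supersolvable_aux (hn : 1 ≤ n) {p q : Fin n}
    (hpq : p.val + 3 ≤ q.val) (hpJ : p ∉ J₀) (hqJ : q ∉ J₀)
    (hK : ∀ c : Fin n, p.val < c.val → c.val < q.val → c ∈ J₀) :
    ¬ Supersolvable (CrossSection (pathGraph n) J₀) := by
  classical
  rintro ⟨Γ, ⟨hchain, hmaxch⟩, hprop⟩
  have hq := q.isLt
  have hJuniv : J₀ ≠ Finset.univ := fun h => hpJ (h ▸ Finset.mem_univ p)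
  set bot' : CrossSection (pathGraph n) J₀ := ⟨∅, admissible_empty _ _⟩ with hbotdef
  set top' : CrossSection (pathGraph n) J₀ := ⟨Finset.univ, admissible_univ hJuniv⟩ with htopdef
  have hmem : ∀ x, (∀ y ∈ Γ, x ≤ y ∨ y ≤ x) → x ∈ Γ := by
    intro x hcomp
    by_contra hx
    have hch : IsChain (· ≤ ·) (insert x Γ) := hchain.insert (fun b hb _ => hcomp b hb)
    have heq := hmaxch hch (Set.subset_insert _ _)
    exact hx (heq ▸ Set.mem_insert x Γ)
  have hbot : bot' ∈ Γ :=
    hmem _ (fun y _ => Or.inl (fun u hu => absurd hu (Finset.notMem_empty u)))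
  have htop : top' ∈ Γ :=
    hmem _ (fun y _ => Or.inr (fun u _ => Finset.mem_univ u))
  have hfin : Γ.Finite := Set.toFinite Γ
  set P : CrossSection (pathGraph n) J₀ → Prop :=
    fun h => ∃ u ∈ h.val, p.val < u.val ∧ u.val < q.val with hPdef
  set F : Finset (CrossSection (pathGraph n) J₀) := hfin.toFinset.filter P with hFdef
  have hmidP : P top' :=
    ⟨⟨p.val + 1, by omega⟩, Finset.mem_univ _, by simp, by simp; omega⟩
  have hFne : F.Nonempty :=
    ⟨top', Finset.mem_filter.mpr ⟨hfin.mem_toFinset.mpr htop, hmidP⟩⟩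
  obtain ⟨g, hgF, hgmin⟩ := F.exists_minimal hFne
  rw [hFdef, Finset.mem_filter, hfin.mem_toFinset] at hgF
  obtain ⟨hgΓ, hgP⟩ := hgF
  have hgleast : ∀ h, h ∈ Γ → P h → g ≤ h := by
    intro h hh hPh
    have hhF : h ∈ F := Finset.mem_filter.mpr ⟨hfin.mem_toFinset.mpr hh, hPh⟩
    by_cases he : h = g
    · exact le_of_eq he.symm
    · rcases hchain hh hgΓ he with h1 | h1
      · exact absurd (le_antisymm h1 (hgmin hhF h1)) he
      · exact h1
  have hgne : bot' ≠ g := by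
    obtain ⟨u, hu, _⟩ := hgP
    intro h
    rw [← h] at hu
    exact absurd hu (Finset.notMem_empty u)
  set F2 : Finset (CrossSection (pathGraph n) J₀) := hfin.toFinset.filter (fun h => h < g)
    with hF2def
  have hbotlt : bot' < g :=
    lt_of_le_of_ne (fun u hu => absurd hu (Finset.notMem_empty u)) hgne
  have hF2ne : F2.Nonempty :=
    ⟨bot', Finset.mem_filter.mpr ⟨hfin.mem_toFinset.mpr hbot, hbotlt⟩⟩
  obtain ⟨gprev, hgprevF, hgprevmax⟩ := F2.exists_maximal hF2ne
  rw [hF2def, Finset.mem_filter, hfin.mem_toFinset] at hgprevF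
  obtain ⟨hgprevΓ, hgprevlt⟩ := hgprevF
  have hgprevgreatest : ∀ h, h ∈ Γ → h < g → h ≤ gprev := by
    intro h hh hlt
    have hhF2 : h ∈ F2 := Finset.mem_filter.mpr ⟨hfin.mem_toFinset.mpr hh, hlt⟩
    by_cases he : h = gprev
    · exact le_of_eq he
    · rcases hchain hh hgprevΓ he with h1 | h1
      · exact h1
      · exact absurd (le_antisymm (hgprevmax hhF2 h1) h1) he
  have hcover : ∀ w : CrossSection (pathGraph n) J₀, gprev < w → w < g → False := by
    intro w h1 h2
    have hwΓ : w ∈ Γ := by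
      apply hmem
      intro h hh
      by_cases he : h = g
      · exact Or.inl (he ▸ h2.le)
      · rcases hchain hh hgΓ he with hle | hle
        · exact Or.inr (le_trans (hgprevgreatest h hh (lt_of_le_of_ne hle he)) h1.le)
        · exact Or.inl (le_trans h2.le hle)
    have : w ∈ F2 := Finset.mem_filter.mpr ⟨hfin.mem_toFinset.mpr hwΓ, h2⟩
    by_cases he : w = gprev
    · rw [he] at h1
      exact lt_irrefl _ h1
    · exact absurd (lt_of_le_of_ne (hgprevgreatest w hwΓ h2) he) (fun _ => by
        exact absurd h1 (not_lt_of_ge (hgprevgreatest w hwΓ h2)))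
  have hgprevg : gprev.val ⊆ g.val := hgprevlt.le
  obtain ⟨v, hvg, hvgprev, hverase⟩ := exists_erase_admissible g.2 gprev.2 hgprevg
    (fun h => (ne_of_lt hgprevlt) (Subtype.ext h))
  have hWle : gprev ≤ (⟨g.val.erase v, hverase⟩ : CrossSection (pathGraph n) J₀) :=
    fun u hu => Finset.mem_erase.mpr ⟨fun he => hvgprev (he ▸ hu), hgprevg hu⟩
  have hWlt : (⟨g.val.erase v, hverase⟩ : CrossSection (pathGraph n) J₀) < g := by
    apply lt_of_le_of_ne (fun u hu => Finset.mem_of_mem_erase hu)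
    intro he
    have h2 : (g.val.erase v) = g.val := congrArg Subtype.val he
    have h3 : v ∈ g.val.erase v := by rw [h2]; exact hvg
    exact Finset.notMem_erase v g.val h3
  have hgprevW : gprev = (⟨g.val.erase v, hverase⟩ : CrossSection (pathGraph n) J₀) := by
    by_contra h
    exact hcover _ (lt_of_le_of_ne hWle h) hWlt
  have hgval : g.val = insert v gprev.val := by
    rw [hgprevW]
    exact (Finset.insert_erase hvg).symm
  have hgprevnotP : ¬ P gprev := fun hP => absurd (hgleast gprev hgprevΓ hP) (not_le_of_gt hgprevlt)
  have hunique : ∀ u ∈ g.val, p.val < u.val → u.val < q.val → u = v := by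
    intro u hu h1 h2
    rw [hgval, Finset.mem_insert] at hu
    rcases hu with rfl | hu
    · rfl
    · exact absurd ⟨u, hu, h1, h2⟩ hgprevnotP
  have hvK : p.val < v.val ∧ v.val < q.val := by
    obtain ⟨u, hu, h1, h2⟩ := hgP
    have he := hunique u hu h1 h2
    exact ⟨he ▸ h1, he ▸ h2⟩
  have hvJ : v ∈ J₀ := hK v hvK.1 hvK.2
  by_cases hcase : v.val + 1 < q.val
  · -- use intervals [v,q] ⊇ [v+1,q]
    set zF : Finset (Fin n) :=
      Finset.univ.filter (fun c => v.val ≤ c.val ∧ c.val ≤ q.val) with hzFdef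
    set yF : Finset (Fin n) :=
      Finset.univ.filter (fun c => v.val + 1 ≤ c.val ∧ c.val ≤ q.val) with hyFdef
    have hzadm : Admissible (pathGraph n) J₀ zF := by
      apply admissible_iff.mpr
      intro a ha
      rw [hzFdef, Finset.mem_filter] at ha
      refine ⟨q, hqJ, fun c hc => Finset.mem_filter.mpr ⟨Finset.mem_univ _, ?_⟩⟩
      unfold Btwn at hc
      omega
    have hyadm : Admissible (pathGraph n) J₀ yF := by
      apply admissible_iff.mpr
      intro a ha
      rw [hyFdef, Finset.mem_filter] at ha
      refine ⟨q, hqJ, fun c hc => Finset.mem_filter.mpr ⟨Finset.mem_univ _, ?_⟩⟩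
      unfold Btwn at hc
      omega
    set zc : CrossSection (pathGraph n) J₀ := ⟨zF, hzadm⟩ with hzcdef
    set yc : CrossSection (pathGraph n) J₀ := ⟨yF, hyadm⟩ with hycdef
    have hyz : yc ≤ zc := by
      intro u hu
      have hu' : u ∈ yF := hu
      rw [hyFdef, Finset.mem_filter] at hu'
      show u ∈ zF
      rw [hzFdef, Finset.mem_filter]
      exact ⟨Finset.mem_univ _, by omega⟩
    have hCchain : IsChain (· ≤ ·) ({yc, zc} : Set (CrossSection (pathGraph n) J₀)) := by
      rintro a (rfl | rfl) b (rfl | rfl) hne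
      · exact absurd rfl hne
      · exact Or.inl hyz
      · exact Or.inr hyz
      · exact absurd rfl hne
    have heq := hprop {yc, zc} hCchain
      zc (subset_latticeClosure (Or.inr (Set.mem_insert_of_mem _ rfl)))
      yc (subset_latticeClosure (Or.inr (Set.mem_insert _ _)))
      g (subset_latticeClosure (Or.inl hgΓ))
    have hvLHS : v ∈ (zc ⊓ (yc ⊔ g)).val := by
      rw [CrossSection.inf_val, mem_meetFinset]
      refine ⟨zF, hzadm, Finset.Subset.refl _, ?_,
        Finset.mem_filter.mpr ⟨Finset.mem_univ _, le_rfl, by omega⟩⟩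
      intro c hc
      rw [CrossSection.sup_val, Finset.mem_union]
      rw [hzFdef, Finset.mem_filter] at hc
      by_cases hcv : c.val = v.val
      · exact Or.inr (show c ∈ g.val from (Fin.ext hcv : c = v) ▸ hvg)
      · exact Or.inl (Finset.mem_filter.mpr ⟨Finset.mem_univ _, by omega⟩)
    rw [heq, CrossSection.sup_val, Finset.mem_union] at hvLHS
    rcases hvLHS with hv1 | hv2
    · have hvy : v ∈ yc.val :=
        CrossSection.meetFinset_subset_right (pathGraph n) J₀ zc.val yc.val hv1
      have hvy' : v ∈ yF := hvy
      rw [hyFdef, Finset.mem_filter] at hvy'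
      omega
    · rw [CrossSection.inf_val, mem_meetFinset] at hv2
      obtain ⟨W, hWadm, hWz, hWg, hvW⟩ := hv2
      obtain ⟨b, hbJ, hbI⟩ := admissible_iff.mp hWadm v hvW
      have hbW : b ∈ W := hbI b (btwn_right _ _)
      have hbz : b ∈ zF := hWz hbW
      rw [hzFdef, Finset.mem_filter] at hbz
      have hbv : b.val ≠ v.val := fun h => hbJ ((Fin.ext h : b = v) ▸ hvJ)
      set v1 : Fin n := ⟨v.val + 1, by omega⟩ with hv1def
      have hv1W : v1 ∈ W := hbI v1 (by unfold Btwn; simp [hv1def]; omega)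
      have hv1g : v1 ∈ g.val := hWg hv1W
      have he := hunique v1 hv1g (by simp [hv1def]; omega) (by simp [hv1def]; omega)
      have := congrArg Fin.val he
      simp [hv1def] at this
  · -- mirrored : intervals [p,v] ⊇ [p,v-1]
    have hvlow : p.val + 1 < v.val := by omega
    set zF : Finset (Fin n) :=
      Finset.univ.filter (fun c => p.val ≤ c.val ∧ c.val ≤ v.val) with hzFdef
    set yF : Finset (Fin n) :=
      Finset.univ.filter (fun c => p.val ≤ c.val ∧ c.val < v.val) with hyFdef
    have hzadm : Admissible (pathGraph n) J₀ zF := by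
      apply admissible_iff.mpr
      intro a ha
      rw [hzFdef, Finset.mem_filter] at ha
      refine ⟨p, hpJ, fun c hc => Finset.mem_filter.mpr ⟨Finset.mem_univ _, ?_⟩⟩
      unfold Btwn at hc
      omega
    have hyadm : Admissible (pathGraph n) J₀ yF := by
      apply admissible_iff.mpr
      intro a ha
      rw [hyFdef, Finset.mem_filter] at ha
      refine ⟨p, hpJ, fun c hc => Finset.mem_filter.mpr ⟨Finset.mem_univ _, ?_⟩⟩
      unfold Btwn at hc
      omega
    set zc : CrossSection (pathGraph n) J₀ := ⟨zF, hzadm⟩ with hzcdef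
    set yc : CrossSection (pathGraph n) J₀ := ⟨yF, hyadm⟩ with hycdef
    have hyz : yc ≤ zc := by
      intro u hu
      have hu' : u ∈ yF := hu
      rw [hyFdef, Finset.mem_filter] at hu'
      show u ∈ zF
      rw [hzFdef, Finset.mem_filter]
      exact ⟨Finset.mem_univ _, by omega⟩
    have hCchain : IsChain (· ≤ ·) ({yc, zc} : Set (CrossSection (pathGraph n) J₀)) := by
      rintro a (rfl | rfl) b (rfl | rfl) hne
      · exact absurd rfl hne
      · exact Or.inl hyz
      · exact Or.inr hyz
      · exact absurd rfl hne
    have heq := hprop {yc, zc} hCchain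
      zc (subset_latticeClosure (Or.inr (Set.mem_insert_of_mem _ rfl)))
      yc (subset_latticeClosure (Or.inr (Set.mem_insert _ _)))
      g (subset_latticeClosure (Or.inl hgΓ))
    have hvLHS : v ∈ (zc ⊓ (yc ⊔ g)).val := by
      rw [CrossSection.inf_val, mem_meetFinset]
      refine ⟨zF, hzadm, Finset.Subset.refl _, ?_,
        Finset.mem_filter.mpr ⟨Finset.mem_univ _, by omega, le_rfl⟩⟩
      intro c hc
      rw [CrossSection.sup_val, Finset.mem_union]
      rw [hzFdef, Finset.mem_filter] at hc
      by_cases hcv : c.val = v.val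
      · exact Or.inr (show c ∈ g.val from (Fin.ext hcv : c = v) ▸ hvg)
      · exact Or.inl (Finset.mem_filter.mpr ⟨Finset.mem_univ _, by omega⟩)
    rw [heq, CrossSection.sup_val, Finset.mem_union] at hvLHS
    rcases hvLHS with hv1 | hv2
    · have hvy : v ∈ yc.val :=
        CrossSection.meetFinset_subset_right (pathGraph n) J₀ zc.val yc.val hv1
      have hvy' : v ∈ yF := hvy
      rw [hyFdef, Finset.mem_filter] at hvy'
      omega
    · rw [CrossSection.inf_val, mem_meetFinset] at hv2
      obtain ⟨W, hWadm, hWz, hWg, hvW⟩ := hv2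
      obtain ⟨b, hbJ, hbI⟩ := admissible_iff.mp hWadm v hvW
      have hbW : b ∈ W := hbI b (btwn_right _ _)
      have hbz : b ∈ zF := hWz hbW
      rw [hzFdef, Finset.mem_filter] at hbz
      have hbv : b.val ≠ v.val := fun h => hbJ ((Fin.ext h : b = v) ▸ hvJ)
      set v1 : Fin n := ⟨v.val - 1, by omega⟩ with hv1def
      have hv1W : v1 ∈ W := hbI v1 (by unfold Btwn; simp [hv1def]; omega)
      have hv1g : v1 ∈ g.val := hWg hv1W
      have he := hunique v1 hv1g (by simp [hv1def]; omega) (by simp [hv1def]; omega)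
      have := congrArg Fin.val he
      simp [hv1def] at this
      omega

end Converse

theorem stmt_16 (n : ℕ) (hn : 1 ≤ n) (J₀ : Finset (Fin n)) :
    Supersolvable (CrossSection (pathGraph n) J₀) ↔
      ∀ a ∈ J₀, (∀ b, ReachIn (pathGraph n) J₀ a b → b = a) ∨
        ReachIn (pathGraph n) J₀ a ⟨0, by omega⟩ ∨
        ReachIn (pathGraph n) J₀ a ⟨n - 1, by omega⟩ := by
  classical
  by_cases hJ : J₀ = Finset.univ
  · apply iff_of_true
    · have hall : ∀ x : CrossSection (pathGraph n) J₀, x.val = ∅ := by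
        intro x
        rw [Finset.eq_empty_iff_forall_notMem]
        intro a ha
        obtain ⟨b, _, hbJ⟩ := x.2 a ha
        exact hbJ (hJ ▸ Finset.mem_univ b)
      have hallEq : ∀ x y : CrossSection (pathGraph n) J₀, x = y :=
        fun x y => Subtype.ext (by rw [hall x, hall y])
      refine ⟨Set.univ, ⟨?_, fun s' _ hsub => (Set.univ_subset_iff.mp hsub).symm⟩, ?_⟩
      · intro x _ y _ hne
        exact absurd (hallEq x y) hne
      · intro C _ x _ y _ z _
        exact hallEq _ _
    · intro a _
      right; left
      rw [reachIn_iff]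
      right
      intro c _
      rw [hJ]
      exact Finset.mem_univ c
  · constructor
    · intro hss
      by_contra hR
      push_neg at hR
      obtain ⟨a, haJ, h1, h2, h3⟩ := hR
      obtain ⟨b, hreach, hba⟩ := h1
      have hint : ∀ c, Btwn a b c → c ∈ J₀ := by
        rcases btwn_of_reachIn hreach with h | h
        · exact absurd h.symm hba
        · exact h
      have hb' : ∃ nb : Fin n, nb ∈ J₀ ∧ (nb.val = a.val + 1 ∨ nb.val + 1 = a.val) := by
        rcases Nat.lt_or_ge a.val b.val with h | h
        · have hblt := b.isLt
          refine ⟨⟨a.val + 1, by omega⟩, hint _ (by unfold Btwn; simp; omega), Or.inl (by simp)⟩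
        · have : b.val < a.val := by
            rcases Nat.lt_or_ge b.val a.val with h' | h'
            · exact h'
            · exact absurd (Fin.ext (by omega) : b = a) hba
          refine ⟨⟨a.val - 1, by omega⟩, hint _ (by unfold Btwn; simp; omega),
            Or.inr (by simp; omega)⟩
      obtain ⟨nb, hnbJ, hnbadj⟩ := hb'
      rw [reachIn_iff] at h2 h3
      push_neg at h2 h3
      obtain ⟨h2a, c2, hc2b, hc2J⟩ := h2
      obtain ⟨h3a, c3, hc3b, hc3J⟩ := h3
      have hc2le : c2.val ≤ a.val := by
        unfold Btwn at hc2b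
        simp at hc2b
        omega
      have hc3ge : a.val ≤ c3.val := by
        have := c3.isLt
        have := a.isLt
        unfold Btwn at hc3b
        simp at hc3b
        omega
      have hFpne : (Finset.univ.filter (fun c : Fin n => c.val ≤ a.val ∧ c ∉ J₀)).Nonempty :=
        ⟨c2, Finset.mem_filter.mpr ⟨Finset.mem_univ _, hc2le, hc2J⟩⟩
      have hFqne : (Finset.univ.filter (fun c : Fin n => a.val ≤ c.val ∧ c ∉ J₀)).Nonempty :=
        ⟨c3, Finset.mem_filter.mpr ⟨Finset.mem_univ _, hc3ge, hc3J⟩⟩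
      obtain ⟨p, hpa, hpJ, hpmax⟩ :
          ∃ p : Fin n, p.val ≤ a.val ∧ p ∉ J₀ ∧
            ∀ c : Fin n, c.val ≤ a.val → c ∉ J₀ → c.val ≤ p.val := by
        obtain ⟨-, h1, h2⟩ := Finset.mem_filter.mp (Finset.max'_mem _ hFpne)
        exact ⟨_, h1, h2, fun c h hc => Fin.le_def.mp
          (Finset.le_max' _ c (Finset.mem_filter.mpr ⟨Finset.mem_univ _, h, hc⟩))⟩
      obtain ⟨q, haq, hqJ, hqmin⟩ :
          ∃ q : Fin n, a.val ≤ q.val ∧ q ∉ J₀ ∧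
            ∀ c : Fin n, a.val ≤ c.val → c ∉ J₀ → q.val ≤ c.val := by
        obtain ⟨-, h1, h2⟩ := Finset.mem_filter.mp (Finset.min'_mem _ hFqne)
        exact ⟨_, h1, h2, fun c h hc => Fin.le_def.mp
          (Finset.min'_le _ c (Finset.mem_filter.mpr ⟨Finset.mem_univ _, h, hc⟩))⟩
      have hpa' : p.val < a.val := by
        rcases Nat.lt_or_ge p.val a.val with h | h
        · exact h
        · exact absurd ((Fin.ext (by omega) : p = a) ▸ haJ) hpJ
      have haq' : a.val < q.val := by
        rcases Nat.lt_or_ge a.val q.val with h | h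
        · exact h
        · exact absurd ((Fin.ext (by omega) : q = a) ▸ haJ) hqJ
      have hK : ∀ c : Fin n, p.val < c.val → c.val < q.val → c ∈ J₀ := by
        intro c h1 h2
        by_contra hc
        rcases Nat.le_total c.val a.val with h | h
        · have := hpmax c h hc
          omega
        · have := hqmin c h hc
          omega
      have hnbp : nb.val ≠ p.val := fun h => hpJ ((Fin.ext h : nb = p) ▸ hnbJ)
      have hnbq : nb.val ≠ q.val := fun h => hqJ ((Fin.ext h : nb = q) ▸ hnbJ)
      have hpq : p.val + 3 ≤ q.val := by
        rcases hnbadj with h | h <;> omega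
      exact absurd hss (not_supersolvable_aux hn hpq hpJ hqJ hK)
    · intro hR
      apply supersolvable_of_star hn hJ
      intro a ha
      rcases hR a ha with h | h | h
      · exact Or.inl h
      · right; left
        rcases btwn_of_reachIn h with he | hint
        · intro c hc
          have ha0 : a.val = 0 := by rw [he]
          have : c = a := Fin.ext (by omega)
          exact this ▸ ha
        · intro c hc
          exact hint c (by unfold Btwn; simp; omega)
      · right; right
        rcases btwn_of_reachIn h with he | hint
        · intro c hc
          have hcv := c.isLt
          have han : a.val = n - 1 := by rw [he]
          have : c = a := Fin.ext (by omega)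
          exact this ▸ ha
        · intro c hc
          have := c.isLt
          exact hint c (by unfold Btwn; simp; omega)
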